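/- Let (b₀,b₁,…) be any sequence of integers and let (v_n) be the sequence of convergents of [b₀,b₁,…]. Then ⟨∞, v₀, v₁, v₂, …⟩ is an infinite path in the Farey graph: ∞ is adjacent to v₀, and v_{n−1} is adjacent to v_n for every n ≥ 1. -/

import Mathlib

open Filter Topology OnePoint

/-- The Möbius map `z ↦ b - 1/z` on the one-point compactification `ℝ∞` of `ℝ`. -/
noncomputable def mob (b : ℤ) (z : OnePoint ℝ) : OnePoint ℝ :=
  Option.elim z ((b : ℝ) : OnePoint ℝ)
    (fun x => if x = 0 then (∞ : OnePoint ℝ) else (((b : ℝ) - 1 / x : ℝ) : OnePoint ℝ))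

/-- Value of a finite continued fraction `[b₀, …, b_m]`, i.e. `s₀(s₁(⋯ s_m(∞)))`. -/
noncomputable def cfVal : List ℤ → OnePoint ℝ
  | [] => ∞
  | b :: t => mob b (cfVal t)

/-- The `n`th convergent `v_n = S_n(∞)` of the continued fraction `[b₀, b₁, …]`. -/
noncomputable def cfConv (b : ℕ → ℤ) (n : ℕ) : OnePoint ℝ :=
  cfVal ((List.range (n + 1)).map b)

/-- `m` is a positive index at which the coefficient is `0`, `1` or `-1`. -/
def badIdx (b : ℕ → ℤ) (m : ℕ) : Prop :=
  1 ≤ m ∧ (b m = 0 ∨ b m = 1 ∨ b m = -1)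

instance (b : ℕ → ℤ) : DecidablePred (badIdx b) := fun m => by
  unfold badIdx; infer_instance

-- The singularization map `Φ` on integer sequences.
open Classical in
noncomputable def Phi (b : ℕ → ℤ) : ℕ → ℤ :=
  if h : ∃ m, badIdx b m then
    let m := Nat.find h
    if b m = 0 then
      fun k => if k + 1 < m then b k
        else if k = m - 1 then b (m - 1) + b (m + 1)
        else b (k + 2)
    else if b m = 1 then
      fun k => if k + 1 < m then b k
        else if k = m - 1 then b (m - 1) - 1
        else if k = m then b (m + 1) - 1
        else b (k + 1)
    else
      fun k => if k + 1 < m then b k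
        else if k = m - 1 then b (m - 1) + 1
        else if k = m then b (m + 1) + 1
        else b (k + 1)
  else b

-- `p(b) ∈ ℕ ∪ {∞}`: the least positive index at which `0`, `1` or `-1` occurs.
open Classical in
noncomputable def pIdx (b : ℕ → ℤ) : ℕ∞ :=
  if h : ∃ m, badIdx b m then (Nat.find h : ℕ∞) else ⊤

/-- `p⁽ⁿ⁾ → ∞` as `n → ∞`. -/
def PTendsToTop (b : ℕ → ℤ) : Prop :=
  ∀ N : ℕ, ∃ M : ℕ, ∀ n ≥ M, (N : ℕ∞) < pIdx (Phi^[n] b)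

/-- `p = liminf pⁿ`, as a natural number (junk value if the liminf is `∞`). -/
noncomputable def pLim (b : ℕ → ℤ) : ℕ :=
  (Filter.liminf (fun n => pIdx (Phi^[n] b)) Filter.atTop).toNat

/-- `q⁽ⁿ⁾ = |b⁽ⁿ⁾_{p-1}|`. -/
noncomputable def qSeq (b : ℕ → ℤ) (n : ℕ) : ℕ :=
  ((Phi^[n] b) (pLim b - 1)).natAbs

/-- Two continued fractions have the same tail. -/
def SameTail (b c : ℕ → ℤ) : Prop := ∃ r s : ℕ, ∀ k : ℕ, b (r + k) = c (s + k)

/-- `bstar` is the limit continued fraction: each coefficient of `Φⁿ(b)` stabilises on it. -/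
def EventuallyCoeff (b bstar : ℕ → ℤ) : Prop :=
  ∀ k : ℕ, ∃ N : ℕ, ∀ n ≥ N, Phi^[n] b k = bstar k

/-- The point of `ℝ∞` represented by the integer fraction `a/b` (`∞` when `b = 0`). -/
noncomputable def intPt (a b : ℤ) : OnePoint ℝ :=
  if b = 0 then ∞ else (((a : ℝ) / (b : ℝ)) : OnePoint ℝ)

/-- Adjacency in the Farey graph: `x = a/b`, `y = c/d` with `ad - bc = ±1`. -/
def FareyAdj (x y : OnePoint ℝ) : Prop :=
  ∃ a b c d : ℤ, x = intPt a b ∧ y = intPt c d ∧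
    (a * d - b * c = 1 ∨ a * d - b * c = -1)

/-- `x` is an extended rational, i.e. a member of `ℚ∞ = ℚ ∪ {∞} ⊆ ℝ∞`. -/
def IsExtRat (x : OnePoint ℝ) : Prop :=
  x = ∞ ∨ ∃ q : ℚ, x = ((q : ℝ) : OnePoint ℝ)

-- One step of the index-tracking sequence, for the current coefficient sequence `c`.
open Classical in
noncomputable def eStep (c : ℕ → ℤ) (e : ℕ) : Option ℕ :=
  if h : ∃ m, badIdx c m then
    let m := Nat.find h
    if c m = 0 then
      if e + 2 ≤ m then Option.some e
      else if e = m - 1 ∨ e = m then (none : Option ℕ)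
      else Option.some (e - 2)
    else
      if e + 2 ≤ m then Option.some e
      else if e = m - 1 then (none : Option ℕ)
      else Option.some (e - 1)
  else Option.some e

/-- The index-tracking sequence `e⁽⁰⁾(k), e⁽¹⁾(k), …` (`none` once it has terminated). -/
noncomputable def eSeq (b : ℕ → ℤ) (k : ℕ) : ℕ → Option ℕ
  | 0 => Option.some k
  | n + 1 => (eSeq b k n).bind (eStep (Phi^[n] b))

/-- The matrix of the Möbius map `z ↦ x - 1/z`. -/
def mobMat (x : ℤ) : Matrix (Fin 2) (Fin 2) ℤ := !![x, -1; 1, 0]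

/-- The matrix of the composition `s_{b₀} ∘ ⋯ ∘ s_{b_m}`. -/
def cfMat (l : List ℤ) : Matrix (Fin 2) (Fin 2) ℤ := (l.map mobMat).prod

lemma cfMat_nil : cfMat [] = 1 := rfl

lemma cfMat_cons (x : ℤ) (t : List ℤ) : cfMat (x :: t) = mobMat x * cfMat t := by
  simp [cfMat]

lemma cfMat_append_singleton (l : List ℤ) (x : ℤ) :
    cfMat (l ++ [x]) = cfMat l * mobMat x := by
  simp [cfMat]

lemma det_mobMat (x : ℤ) : (mobMat x).det = 1 := by
  simp [mobMat, Matrix.det_fin_two_of]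

lemma det_cfMat (l : List ℤ) : (cfMat l).det = 1 := by
  induction l with
  | nil => simp [cfMat_nil]
  | cons x t ih => rw [cfMat_cons, Matrix.det_mul, det_mobMat, ih, one_mul]

lemma det_cfMat' (l : List ℤ) :
    cfMat l 0 0 * cfMat l 1 1 - cfMat l 0 1 * cfMat l 1 0 = 1 := by
  have := det_cfMat l
  rwa [Matrix.det_fin_two] at this

lemma mobMat_mul_apply (x : ℤ) (M : Matrix (Fin 2) (Fin 2) ℤ) :
    (mobMat x * M) 0 0 = x * M 0 0 - M 1 0 ∧
    (mobMat x * M) 1 0 = M 0 0 := by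
  constructor <;> · simp [mobMat, Matrix.mul_apply, Fin.sum_univ_two]; try ring

lemma mul_mobMat_apply (x : ℤ) (M : Matrix (Fin 2) (Fin 2) ℤ) :
    (M * mobMat x) 0 0 = x * M 0 0 + M 0 1 ∧
    (M * mobMat x) 1 0 = x * M 1 0 + M 1 1 := by
  constructor <;> · simp [mobMat, Matrix.mul_apply, Fin.sum_univ_two]; ring

lemma cfVal_eq_intPt (l : List ℤ) : cfVal l = intPt (cfMat l 0 0) (cfMat l 1 0) := by
  induction l with
  | nil =>
    show (∞ : OnePoint ℝ) = intPt 1 0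
    simp [intPt]
  | cons x t ih =>
    have hdet := det_cfMat' t
    obtain ⟨h00, h10⟩ := mobMat_mul_apply x (cfMat t)
    rw [cfMat_cons]
    rw [h00, h10]
    set a := cfMat t 0 0 with ha
    set c := cfMat t 1 0 with hc
    show mob x (cfVal t) = _
    rw [ih]
    by_cases hcz : c = 0
    · -- cfVal t = ∞, so mob is x; a ≠ 0
      have haz : a ≠ 0 := by
        intro h; rw [h, hcz] at hdet; simp at hdet
      rw [intPt, if_pos hcz]
      show ((x : ℝ) : OnePoint ℝ) = intPt (x * a - c) a
      rw [intPt, if_neg haz, hcz]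
      congr 1
      have : (a : ℝ) ≠ 0 := Int.cast_ne_zero.mpr haz
      push_cast
      field_simp
      ring
    · rw [intPt, if_neg hcz]
      have hcR : (c : ℝ) ≠ 0 := Int.cast_ne_zero.mpr hcz
      show (if ((a : ℝ) / (c : ℝ)) = 0 then (∞ : OnePoint ℝ)
          else (((x : ℝ) - 1 / ((a : ℝ) / (c : ℝ)) : ℝ) : OnePoint ℝ)) = _
      by_cases haz : a = 0
      · have : ((a : ℝ) / (c : ℝ)) = 0 := by rw [haz]; simp
        rw [if_pos this, intPt, if_pos (by rw [haz])]
      · have haR : (a : ℝ) ≠ 0 := Int.cast_ne_zero.mpr haz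
        have hne : ((a : ℝ) / (c : ℝ)) ≠ 0 := div_ne_zero haR hcR
        rw [if_neg hne, intPt, if_neg haz]
        congr 1
        push_cast
        field_simp
        try ring

lemma cfConv_eq_intPt (b : ℕ → ℤ) (n : ℕ) :
    cfConv b n = intPt (cfMat ((List.range (n + 1)).map b) 0 0)
      (cfMat ((List.range (n + 1)).map b) 1 0) :=
  cfVal_eq_intPt _

/-- The convergents of any integer continued fraction form an infinite path
`⟨∞, v₀, v₁, …⟩` in the Farey graph. -/
theorem stmt19 (b : ℕ → ℤ) :
    FareyAdj ∞ (cfConv b 0) ∧ ∀ n : ℕ, FareyAdj (cfConv b n) (cfConv b (n + 1)) := by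
  constructor
  · -- ∞ = intPt 1 0, v₀ = intPt (b 0) 1
    refine ⟨1, 0, b 0, 1, ?_, ?_, Or.inl (by ring)⟩
    · simp [intPt]
    · rw [cfConv_eq_intPt]
      have h : (List.range 1).map b = [b 0] := rfl
      rw [h]
      have h1 : cfMat [b 0] = mobMat (b 0) := by
        rw [show [b 0] = b 0 :: ([] : List ℤ) from rfl, cfMat_cons, cfMat_nil, mul_one]
      rw [h1]
      have e1 : mobMat (b 0) 0 0 = b 0 := by simp [mobMat]
      have e2 : mobMat (b 0) 1 0 = 1 := by simp [mobMat]
      rw [e1, e2]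
  · intro n
    set l := (List.range (n + 1)).map b with hl
    have hsucc : (List.range (n + 2)).map b = l ++ [b (n + 1)] := by
      rw [hl, List.range_succ, List.map_append]
      rfl
    set M := cfMat l with hM
    obtain ⟨h00, h10⟩ := mul_mobMat_apply (b (n + 1)) M
    refine ⟨M 0 0, M 1 0, cfMat (l ++ [b (n + 1)]) 0 0, cfMat (l ++ [b (n + 1)]) 1 0,
      cfConv_eq_intPt b n, ?_, ?_⟩
    · rw [cfConv_eq_intPt, hsucc]
    · rw [cfMat_append_singleton, h00, h10]
      left
      have := det_cfMat' l
      rw [← hM] at this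
      ring_nf
      ring_nf at this
      linarith
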